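/- Let Q_1, …, Q_N be d×d Hermitian unitary complex matrices, p_1, …, p_N ∈ [0, 1], ρ a density matrix, and O a d×d complex matrix with ‖O‖ ≤ 1. For g ∈ ℝ define f(g) = Tr(ρ · (N_N^{(g)} ∘ ⋯ ∘ N_1^{(g)})(O)) with N_i^{(g)}(A) = (1 − g p_i) A + g p_i Q_i A Q_i. Let K ≥ 0 with K + 1 ≤ N, let g_0, …, g_K be pairwise distinct positive reals, and let β_ℓ = ∏_{m ≠ ℓ} g_m / (g_m − g_ℓ). Then |∑_{ℓ=0}^{K} β_ℓ f(g_ℓ) − Tr(ρ O)| ≤ ∑_{k=K+1}^{N} 2^k · |∑_{ℓ=0}^{K} β_ℓ g_ℓ^k| · e_k(p_1, …, p_N), where e_k denotes the elementary symmetric polynomial of degree k. -/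

import Mathlib

open Matrix
open scoped Matrix.Norms.L2Operator ComplexOrder

section ZNEAux

lemma zne_norm_one_le_one (d : ℕ) : ‖(1 : Matrix (Fin d) (Fin d) ℂ)‖ ≤ 1 := by
  rw [Matrix.cstar_norm_def, _root_.map_one]
  exact ContinuousLinearMap.norm_id_le

lemma zne_trace_bound (d : ℕ) (ρ A : Matrix (Fin d) (Fin d) ℂ)
    (hρ : ρ.PosSemidef) (hρtr : ρ.trace = 1) :
    ‖(ρ * A).trace‖ ≤ ‖A‖ := by
  obtain ⟨S, hSS, hSH⟩ : ∃ S : Matrix (Fin d) (Fin d) ℂ, S * S = ρ ∧ Sᴴ = S := by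
    open scoped MatrixOrder in
    exact ⟨CFC.sqrt ρ, CFC.sqrt_mul_sqrt_self ρ hρ.nonneg, (CFC.sqrt_nonneg ρ).posSemidef.1⟩
  have hconj : ∀ a j, (starRingEnd ℂ) (S a j) = S j a := by
    intro a j
    have := congrFun (congrFun hSH j) a
    simpa [Matrix.conjTranspose_apply] using this
  have h1 : (ρ * A).trace = (S * A * S).trace := by
    rw [← hSS]; exact (Matrix.trace_mul_cycle S A S).symm
  let u : Fin d → EuclideanSpace ℂ (Fin d) := fun j => WithLp.toLp 2 (fun a => S a j)
  have hentry : ∀ j, (S * A * S) j j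
      = (inner ℂ (u j) ((EuclideanSpace.equiv (Fin d) ℂ).symm (A *ᵥ u j)) : ℂ) := by
    intro j
    simp only [PiLp.inner_apply, RCLike.inner_apply, Matrix.mul_apply, Matrix.mulVec,
      dotProduct, EuclideanSpace.equiv, PiLp.coe_symm_continuousLinearEquiv,
      WithLp.ofLp_toLp, u]
    simp only [hconj, Finset.sum_mul, Finset.mul_sum]
    rw [Finset.sum_comm]
    exact Finset.sum_congr rfl fun a _ => Finset.sum_congr rfl fun b _ => by ring
  have hnorm2 : ∀ j, ‖u j‖ ^ 2 = (ρ j j).re := by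
    intro j
    have h2 : (inner ℂ (u j) (u j) : ℂ) = ρ j j := by
      simp only [PiLp.inner_apply, RCLike.inner_apply, u, hconj]
      rw [← hSS]; simp [Matrix.mul_apply, mul_comm]
    have h3 := @norm_sq_eq_re_inner ℂ _ _ _ _ (u j)
    rw [h2] at h3
    exact h3
  have hterm : ∀ j, ‖(S * A * S) j j‖ ≤ ‖A‖ * ‖u j‖ ^ 2 := by
    intro j
    rw [hentry j]
    calc ‖(inner ℂ (u j) ((EuclideanSpace.equiv (Fin d) ℂ).symm (A *ᵥ u j)) : ℂ)‖
        ≤ ‖u j‖ * ‖(EuclideanSpace.equiv (Fin d) ℂ).symm (A *ᵥ u j)‖ := norm_inner_le_norm _ _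
      _ ≤ ‖u j‖ * (‖A‖ * ‖u j‖) :=
          mul_le_mul_of_nonneg_left (Matrix.l2_opNorm_mulVec A (u j)) (norm_nonneg _)
      _ = ‖A‖ * ‖u j‖ ^ 2 := by ring
  calc ‖(ρ * A).trace‖ = ‖∑ j, (S * A * S) j j‖ := by
        rw [h1]; rfl
    _ ≤ ∑ j, ‖(S * A * S) j j‖ := norm_sum_le _ _
    _ ≤ ∑ j, ‖A‖ * ‖u j‖ ^ 2 := Finset.sum_le_sum fun j _ => by
        exact hterm j
    _ = ‖A‖ * (∑ j, (ρ j j).re) := by rw [← Finset.mul_sum]; simp [hnorm2]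
    _ = ‖A‖ := by
        have h4 : (∑ j, (ρ j j).re) = (ρ.trace).re := by
          rw [Matrix.trace]; simp [Matrix.diag]
        rw [h4, hρtr]; simp

noncomputable def zStep (d N : ℕ) (Q : Fin N → Matrix (Fin d) (Fin d) ℂ) (p : Fin N → ℝ)
    (x : ℝ) (A : Matrix (Fin d) (Fin d) ℂ) (i : Fin N) : Matrix (Fin d) (Fin d) ℂ :=
  (1 - (x : ℂ) * (p i : ℂ)) • A + ((x : ℂ) * (p i : ℂ)) • (Q i * A * Q i)

def eList : List ℝ → ℕ → ℝ
  | _, 0 => 1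
  | [], _+1 => 0
  | a :: l, k+1 => eList l (k+1) + a * eList l k

lemma eList_zero : ∀ (l : List ℝ) (k : ℕ), l.length < k → eList l k = 0 := by
  intro l
  induction l with
  | nil => intro k hk; cases k with
    | zero => omega
    | succ k => rfl
  | cons a l ih =>
    intro k hk
    cases k with
    | zero => omega
    | succ k =>
      show eList l (k+1) + a * eList l k = 0
      simp at hk
      rw [ih (k+1) (by omega), ih k (by omega)]
      ring

lemma zne_foldl_lin (d N : ℕ) (Q : Fin N → Matrix (Fin d) (Fin d) ℂ) (p : Fin N → ℝ) (x : ℝ) :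
    ∀ (L : List (Fin N)) (a b : ℂ) (A B : Matrix (Fin d) (Fin d) ℂ),
      L.foldl (zStep d N Q p x) (a • A + b • B)
        = a • L.foldl (zStep d N Q p x) A + b • L.foldl (zStep d N Q p x) B := by
  intro L
  induction L with
  | nil => intro a b A B; rfl
  | cons i L ih =>
    intro a b A B
    have hstep : zStep d N Q p x (a • A + b • B) i
        = a • zStep d N Q p x A i + b • zStep d N Q p x B i := by
      simp only [zStep, Matrix.mul_add, Matrix.add_mul, Matrix.mul_smul, Matrix.smul_mul,
        smul_add, smul_smul]
      ring_nf
      abel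
    show List.foldl _ (zStep d N Q p x (a • A + b • B) i) L = _
    rw [hstep, ih]
    rfl

lemma zne_foldl_zero (d N : ℕ) (Q : Fin N → Matrix (Fin d) (Fin d) ℂ) (p : Fin N → ℝ)
    (O : Matrix (Fin d) (Fin d) ℂ) :
    ∀ (L : List (Fin N)), L.foldl (zStep d N Q p 0) O = O := by
  intro L
  induction L with
  | nil => rfl
  | cons i L ih =>
    show List.foldl _ (zStep d N Q p 0 O i) L = O
    have : zStep d N Q p 0 O i = O := by simp [zStep]
    rw [this, ih]

set_option maxHeartbeats 1000000 in
lemma zne_key (d N : ℕ) (Q : Fin N → Matrix (Fin d) (Fin d) ℂ) (hQ : ∀ i, ‖Q i‖ ≤ 1)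
    (p : Fin N → ℝ) (hp : ∀ i, 0 ≤ p i) (ρ : Matrix (Fin d) (Fin d) ℂ)
    (hρ : ρ.PosSemidef) (hρtr : ρ.trace = 1) :
    ∀ (L : List (Fin N)) (A : Matrix (Fin d) (Fin d) ℂ), ‖A‖ ≤ 1 →
      ∃ F : Polynomial ℂ,
        (∀ x : ℝ, (ρ * L.foldl (zStep d N Q p x) A).trace = F.eval (x : ℂ)) ∧
        (∀ k, ‖F.coeff k‖ ≤ 2 ^ k * eList (L.map p) k) := by
  intro L
  induction L with
  | nil =>
    intro A hA
    refine ⟨Polynomial.C ((ρ * A).trace), fun x => by simp, fun k => ?_⟩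
    cases k with
    | zero =>
      simpa [eList] using (zne_trace_bound d ρ A hρ hρtr).trans hA
    | succ k =>
      simp [Polynomial.coeff_C, eList]
  | cons i L ih =>
    intro A hA
    obtain ⟨FA, hFA, hFAc⟩ := ih A hA
    have hB : ‖Q i * A * Q i‖ ≤ 1 := by
      calc ‖Q i * A * Q i‖ ≤ ‖Q i * A‖ * ‖Q i‖ := Matrix.l2_opNorm_mul _ _
        _ ≤ (‖Q i‖ * ‖A‖) * ‖Q i‖ :=
            mul_le_mul_of_nonneg_right (Matrix.l2_opNorm_mul _ _) (norm_nonneg _)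
        _ ≤ 1 := mul_le_one₀ (mul_le_one₀ (hQ i) (norm_nonneg A) hA) (norm_nonneg _) (hQ i)
    obtain ⟨FB, hFB, hFBc⟩ := ih (Q i * A * Q i) hB
    refine ⟨FA + (Polynomial.C ((p i : ℂ)) * Polynomial.X) * (FB - FA), ?_, ?_⟩
    · intro x
      show (ρ * List.foldl (zStep d N Q p x) (zStep d N Q p x A i) L).trace = _
      have hz : zStep d N Q p x A i
          = (1 - (x : ℂ) * (p i : ℂ)) • A + ((x : ℂ) * (p i : ℂ)) • (Q i * A * Q i) := rfl
      rw [hz, zne_foldl_lin, Matrix.mul_add, Matrix.mul_smul, Matrix.mul_smul,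
        Matrix.trace_add, Matrix.trace_smul, Matrix.trace_smul, hFA x, hFB x]
      simp only [Polynomial.eval_add, Polynomial.eval_mul, Polynomial.eval_sub,
        Polynomial.eval_C, Polynomial.eval_X, smul_eq_mul]
      ring
    · intro k
      cases k with
      | zero =>
        have hco : (FA + (Polynomial.C ((p i : ℂ)) * Polynomial.X) * (FB - FA)).coeff 0
            = FA.coeff 0 := by
          simp [Polynomial.coeff_add, Polynomial.mul_coeff_zero, Polynomial.coeff_X_zero]
        rw [hco]
        simpa [eList] using hFAc 0
      | succ k =>
        have hco : (FA + (Polynomial.C ((p i : ℂ)) * Polynomial.X) * (FB - FA)).coeff (k+1)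
            = FA.coeff (k+1) + (p i : ℂ) * ((FB - FA).coeff k) := by
          rw [Polynomial.coeff_add, mul_assoc, Polynomial.coeff_C_mul, Polynomial.coeff_X_mul]
        rw [hco]
        have e1 : ‖FA.coeff (k+1) + (p i : ℂ) * ((FB - FA).coeff k)‖
            ≤ ‖FA.coeff (k+1)‖
              + p i * (‖FB.coeff k‖ + ‖FA.coeff k‖) := by
          refine (norm_add_le _ _).trans ?_
          rw [norm_mul, Complex.norm_of_nonneg (hp i)]
          simp only [Polynomial.coeff_sub]
          have hs := norm_sub_le (FB.coeff k) (FA.coeff k)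
          have hps := mul_le_mul_of_nonneg_left hs (hp i)
          linarith
        have rhs_eq : 2 ^ (k+1) * eList (((i :: L).map p)) (k+1)
            = 2 ^ (k+1) * eList (L.map p) (k+1)
              + p i * (2 ^ k * eList (L.map p) k) + p i * (2 ^ k * eList (L.map p) k) := by
          show 2 ^ (k+1) * (eList (L.map p) (k+1) + p i * eList (L.map p) k) = _
          ring
        rw [rhs_eq]
        have b1 := hFAc (k+1)
        have b2 := mul_le_mul_of_nonneg_left (hFAc k) (hp i)
        have b3 := mul_le_mul_of_nonneg_left (hFBc k) (hp i)
        have b4 := mul_le_mul_of_nonneg_left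
          (add_le_add (hFBc k) (hFAc k)) (hp i)
        linarith [e1, b1, b4, mul_add (p i) (2 ^ k * eList (L.map p) k) (2 ^ k * eList (L.map p) k)]

open Polynomial in
lemma zne_richardson (K : ℕ) (g : Fin (K+1) → ℝ) (hg : Function.Injective g) (k : ℕ) (hk : k ≤ K) :
    ∑ ℓ, (∏ m ∈ Finset.univ.erase ℓ, g m / (g m - g ℓ)) * g ℓ ^ k = (0:ℝ) ^ k := by
  have hdeg : ((X : ℝ[X]) ^ k).degree < (Finset.univ : Finset (Fin (K+1))).card := by
    rw [Polynomial.degree_X_pow, Finset.card_univ, Fintype.card_fin]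
    exact_mod_cast Nat.lt_succ_of_le hk
  have hinterp := Lagrange.eq_interpolate (v := g) (s := Finset.univ) hg.injOn hdeg
  have heval := congrArg (Polynomial.eval (0:ℝ)) hinterp
  rw [Polynomial.eval_pow, Polynomial.eval_X] at heval
  rw [heval, Lagrange.interpolate_apply, Polynomial.eval_finset_sum]
  refine Finset.sum_congr rfl fun ℓ _ => ?_
  rw [Polynomial.eval_mul, Polynomial.eval_C, Polynomial.eval_pow, Polynomial.eval_X,
    mul_comm]
  congr 1
  rw [Lagrange.basis, Polynomial.eval_prod]
  refine Finset.prod_congr rfl fun m hm => ?_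
  have hne : g m ≠ g ℓ := fun h => (Finset.mem_erase.1 hm).1 (hg h)
  rw [Lagrange.basisDivisor, Polynomial.eval_mul, Polynomial.eval_C, Polynomial.eval_sub,
    Polynomial.eval_X, Polynomial.eval_C]
  have h1 : g ℓ - g m ≠ 0 := sub_ne_zero.2 (Ne.symm hne)
  have h2 : g m - g ℓ ≠ 0 := sub_ne_zero.2 hne
  field_simp
  ring

lemma zne_esym_insert {ι : Type*} [DecidableEq ι] (p : ι → ℝ) (a : ι) (s : Finset ι)
    (ha : a ∉ s) (k : ℕ) :
    ∑ S ∈ (insert a s).powersetCard (k+1), ∏ i ∈ S, p i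
      = ∑ S ∈ s.powersetCard (k+1), ∏ i ∈ S, p i
        + p a * ∑ S ∈ s.powersetCard k, ∏ i ∈ S, p i := by
  rw [Finset.powersetCard_succ_insert ha]
  have hdisj : Disjoint (s.powersetCard (k+1)) ((s.powersetCard k).image (insert a)) := by
    rw [Finset.disjoint_left]
    intro T h1 h2
    obtain ⟨hT, -⟩ := Finset.mem_powersetCard.1 h1
    obtain ⟨S, hS, rfl⟩ := Finset.mem_image.1 h2
    exact ha (hT (Finset.mem_insert_self a S))
  rw [Finset.sum_union hdisj]
  congr 1
  rw [Finset.sum_image ?hinj]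
  case hinj =>
    intro S hS T hT hST
    obtain ⟨hSs, -⟩ := Finset.mem_powersetCard.1 hS
    obtain ⟨hTs, -⟩ := Finset.mem_powersetCard.1 hT
    have haS : a ∉ S := fun h => ha (hSs h)
    have haT : a ∉ T := fun h => ha (hTs h)
    rw [← Finset.erase_insert haS, ← Finset.erase_insert haT, hST]
  rw [Finset.mul_sum]
  refine Finset.sum_congr rfl fun S hS => ?_
  obtain ⟨hSs, -⟩ := Finset.mem_powersetCard.1 hS
  exact Finset.prod_insert fun h => ha (hSs h)

lemma zne_eList_eq (N : ℕ) (p : Fin N → ℝ) :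
    ∀ (L : List (Fin N)), L.Nodup →
      ∀ k, eList (L.map p) k = ∑ S ∈ L.toFinset.powersetCard k, ∏ i ∈ S, p i := by
  intro L
  induction L with
  | nil =>
    intro _ k
    cases k with
    | zero => simp [eList]
    | succ k => rw [Finset.powersetCard_eq_empty.2 (by simp)]; simp [eList]
  | cons i L ih =>
    intro hnd k
    have hi : i ∉ L.toFinset := by
      simp [List.mem_toFinset]
      exact (List.nodup_cons.1 hnd).1
    have hndL := (List.nodup_cons.1 hnd).2
    cases k with
    | zero => simp [eList]
    | succ k =>
      rw [List.toFinset_cons, zne_esym_insert p i L.toFinset hi k]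
      show eList (L.map p) (k+1) + p i * eList (L.map p) k = _
      rw [ih hndL (k+1), ih hndL k]

end ZNEAux

/-- **Zero-noise extrapolation error bound.**
Let `Q 1, …, Q N` be Hermitian unitary `d×d` complex matrices, `p i ∈ [0,1]`, `ρ` a
density matrix, `O` with `‖O‖ ≤ 1`.  For `g ∈ ℝ` let
`f g = Tr(ρ (N_N^{(g)} ∘ ⋯ ∘ N_1^{(g)})(O))` with
`N_i^{(g)} A = (1 − g p i) A + g p i Q i A Q i`.  For `K + 1 ≤ N`, pairwise distinct
positive nodes `g 0, …, g K` and Richardson weights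
`β ℓ = ∏_{m ≠ ℓ} g m / (g m − g ℓ)`, one has
`|∑ ℓ, β ℓ f (g ℓ) − Tr(ρ O)| ≤ ∑_{k=K+1}^{N} 2^k |∑ ℓ, β ℓ (g ℓ)^k| e_k(p)`,
with `e_k` the elementary symmetric polynomial of degree `k`. -/
theorem zne_richardson_error_bound (d N K : ℕ) (hKN : K + 1 ≤ N)
    (Q : Fin N → Matrix (Fin d) (Fin d) ℂ)
    (hQ_herm : ∀ i, (Q i)ᴴ = Q i) (hQ_unit : ∀ i, Q i * Q i = 1)
    (p : Fin N → ℝ) (hp : ∀ i, p i ∈ Set.Icc (0 : ℝ) 1)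
    (ρ O : Matrix (Fin d) (Fin d) ℂ)
    (hρ : ρ.PosSemidef) (hρ_tr : ρ.trace = 1) (hO : ‖O‖ ≤ 1)
    (g : Fin (K + 1) → ℝ) (hg_inj : Function.Injective g) (hg_pos : ∀ ℓ, 0 < g ℓ)
    (β : Fin (K + 1) → ℝ)
    (hβ : ∀ ℓ, β ℓ = ∏ m ∈ Finset.univ.erase ℓ, g m / (g m - g ℓ))
    (f : ℝ → ℂ)
    (hf : ∀ x : ℝ, f x = (ρ * (List.finRange N).foldl
        (fun A i => (1 - (x * p i : ℝ)) • A + ((x * p i : ℝ) : ℂ) • (Q i * A * Q i)) O).trace) :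
    ‖(∑ ℓ, (β ℓ : ℂ) * f (g ℓ)) - (ρ * O).trace‖
      ≤ ∑ k ∈ Finset.Icc (K + 1) N,
          2 ^ k * |∑ ℓ, β ℓ * g ℓ ^ k| *
            ∑ S ∈ Finset.univ.powersetCard k, ∏ i ∈ S, p i := by
  have hp0 : ∀ i, 0 ≤ p i := fun i => (hp i).1
  have hQ1 : ∀ i, ‖Q i‖ ≤ 1 := by
    intro i
    have h := Matrix.l2_opNorm_conjTranspose_mul_self (Q i)
    rw [hQ_herm i, hQ_unit i] at h
    nlinarith [norm_nonneg (Q i), zne_norm_one_le_one d]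
  obtain ⟨F, hFeval, hFc⟩ :=
    zne_key d N Q hQ1 p hp0 ρ hρ hρ_tr (List.finRange N) O hO
  -- rewrite f in terms of F
  have hsmul : ∀ (r : ℝ) (A : Matrix (Fin d) (Fin d) ℂ), r • A = ((r : ℂ)) • A := by
    intro r A
    rw [← smul_one_smul ℂ r A]
    congr 1
    rw [Complex.real_smul, mul_one]
  have hfF : ∀ x : ℝ, f x = F.eval (x : ℂ) := by
    intro x
    have hfun : (fun (A : Matrix (Fin d) (Fin d) ℂ) (i : Fin N) =>
        (1 - (x * p i : ℝ)) • A + ((x * p i : ℝ) : ℂ) • (Q i * A * Q i))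
        = zStep d N Q p x := by
      funext A i
      show (1 - (x * p i : ℝ)) • A + ((x * p i : ℝ) : ℂ) • (Q i * A * Q i)
          = zStep d N Q p x A i
      rw [zStep, hsmul]
      push_cast
      ring_nf
    rw [hf x, hfun, hFeval x]
  -- the coefficient bound, in final form
  have hE : ∀ k, eList ((List.finRange N).map p) k
      = ∑ S ∈ Finset.univ.powersetCard k, ∏ i ∈ S, p i := by
    intro k
    rw [zne_eList_eq N p (List.finRange N) (List.nodup_finRange N) k, List.toFinset_finRange]
  -- degree bound
  have hdeg : F.natDegree ≤ N := by
    refine Polynomial.natDegree_le_iff_coeff_eq_zero.2 fun m hm => ?_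
    have hz : eList ((List.finRange N).map p) m = 0 := by
      refine eList_zero _ m ?_
      simpa using hm
    have hb := hFc m
    rw [hz, mul_zero] at hb
    exact norm_eq_zero.1 (le_antisymm hb (norm_nonneg _))
  -- trace at zero
  have hO0 : (ρ * O).trace = F.eval 0 := by
    have := hFeval 0
    rw [zne_foldl_zero] at this
    simpa using this
  -- Richardson weights
  have hR : ∀ k : ℕ, k ≤ K → ∑ ℓ, β ℓ * g ℓ ^ k = (0:ℝ) ^ k := by
    intro k hk
    rw [← zne_richardson K g hg_inj k hk]
    exact Finset.sum_congr rfl fun ℓ _ => by rw [hβ ℓ]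
  set σ : ℕ → ℝ := fun k => ∑ ℓ, β ℓ * g ℓ ^ k with hσ
  have hcast : ∀ k, ((σ k : ℝ) : ℂ) = ∑ ℓ, (β ℓ : ℂ) * ((g ℓ : ℝ) : ℂ) ^ k := by
    intro k; rw [hσ]; push_cast; rfl
  have hNdeg : F.natDegree < N + 1 := Nat.lt_succ_of_le hdeg
  have hswap : ∑ ℓ, (β ℓ : ℂ) * f (g ℓ)
      = ∑ k ∈ Finset.range (N+1), F.coeff k * ((σ k : ℝ) : ℂ) := by
    have h1 : ∀ ℓ, f (g ℓ) = ∑ k ∈ Finset.range (N+1), F.coeff k * ((g ℓ : ℝ) : ℂ) ^ k := by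
      intro ℓ
      rw [hfF (g ℓ)]
      exact Polynomial.eval_eq_sum_range' hNdeg _
    simp_rw [h1, Finset.mul_sum]
    rw [Finset.sum_comm]
    refine Finset.sum_congr rfl fun k _ => ?_
    rw [hcast k, Finset.mul_sum]
    exact Finset.sum_congr rfl fun ℓ _ => by ring
  have hsplit : ∑ k ∈ Finset.range (N+1), F.coeff k * ((σ k : ℝ) : ℂ)
      = ∑ k ∈ Finset.range (K+1), F.coeff k * ((σ k : ℝ) : ℂ)
        + ∑ k ∈ Finset.Icc (K+1) N, F.coeff k * ((σ k : ℝ) : ℂ) := by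
    have hun : Finset.range (N+1) = Finset.range (K+1) ∪ Finset.Icc (K+1) N := by
      ext a; simp only [Finset.mem_range, Finset.mem_union, Finset.mem_Icc]; omega
    have hdis : Disjoint (Finset.range (K+1)) (Finset.Icc (K+1) N) := by
      rw [Finset.disjoint_left]
      intro a h1 h2
      simp only [Finset.mem_range] at h1
      simp only [Finset.mem_Icc] at h2
      omega
    rw [hun, Finset.sum_union hdis]
  have hlow : ∑ k ∈ Finset.range (K+1), F.coeff k * ((σ k : ℝ) : ℂ) = F.coeff 0 := by
    rw [Finset.sum_eq_single 0]
    · have h0 : σ 0 = 1 := by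
        rw [hσ]
        simpa using hR 0 (Nat.zero_le K)
      rw [h0]; simp
    · intro k hk hk0
      have hkK : k ≤ K := by simpa using Nat.lt_succ_iff.1 (Finset.mem_range.1 hk)
      have : σ k = 0 := by
        rw [hσ]
        have := hR k hkK
        rwa [zero_pow hk0] at this
      rw [this]; simp
    · intro h; exact absurd (Finset.mem_range.2 (Nat.succ_pos K)) h
  have hmain : (∑ ℓ, (β ℓ : ℂ) * f (g ℓ)) - (ρ * O).trace
      = ∑ k ∈ Finset.Icc (K+1) N, F.coeff k * ((σ k : ℝ) : ℂ) := by
    rw [hswap, hsplit, hlow, hO0, ← Polynomial.coeff_zero_eq_eval_zero]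
    ring
  rw [hmain]
  calc ‖∑ k ∈ Finset.Icc (K+1) N, F.coeff k * ((σ k : ℝ) : ℂ)‖
      ≤ ∑ k ∈ Finset.Icc (K+1) N, ‖F.coeff k * ((σ k : ℝ) : ℂ)‖ :=
        norm_sum_le _ _
    _ ≤ ∑ k ∈ Finset.Icc (K+1) N,
          2 ^ k * |∑ ℓ, β ℓ * g ℓ ^ k| * ∑ S ∈ Finset.univ.powersetCard k, ∏ i ∈ S, p i := by
        refine Finset.sum_le_sum fun k _ => ?_
        rw [norm_mul, Complex.norm_real, Real.norm_eq_abs]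
        have hb := hFc k
        rw [hE k] at hb
        calc ‖F.coeff k‖ * |σ k|
            ≤ (2 ^ k * ∑ S ∈ Finset.univ.powersetCard k, ∏ i ∈ S, p i) * |σ k| :=
              mul_le_mul_of_nonneg_right hb (abs_nonneg _)
          _ = 2 ^ k * |∑ ℓ, β ℓ * g ℓ ^ k| * ∑ S ∈ Finset.univ.powersetCard k, ∏ i ∈ S, p i := by
              rw [hσ]; ring
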